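/- Let U ⊂ ℝ^m be a convex compact set, F : ℝ^m → ℂ^N continuously differentiable with F|_U injective and DF(θ) injective for all θ ∈ U, and let G : ℝ^m → ℂ^M be continuously differentiable with ‖DG(θ)‖_op ≤ C' for all θ ∈ U. Then there exists C'' > 0 such that for all θ, θ' ∈ U, ‖G(θ) - G(θ')‖ ≤ C'' · ‖F(θ) - F(θ')‖. -/

import Mathlib

set_option maxHeartbeats 1000000

open Metric Set

lemma reverse_lip (m N : ℕ) (U : Set (EuclideanSpace ℝ (Fin m)))
    (F : EuclideanSpace ℝ (Fin m) → EuclideanSpace ℂ (Fin N))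
    (hUcomp : IsCompact U)
    (hF : ContDiff ℝ 1 F) (hFinj : Set.InjOn F U)
    (hDF : ∀ θ ∈ U, Function.Injective (fderiv ℝ F θ)) :
    ∃ c > 0, ∀ x ∈ U, ∀ y ∈ U, ‖x - y‖ ≤ c * ‖F x - F y‖ := by
  rcases U.eq_empty_or_nonempty with hU | hU
  · exact ⟨1, one_pos, by simp [hU]⟩
  -- local antilipschitz bounds
  have hloc : ∀ θ : EuclideanSpace ℝ (Fin m), ∃ L ε : ℝ, 0 < L ∧ 0 < ε ∧
      (θ ∈ U → ∀ x ∈ ball θ ε, ∀ y ∈ ball θ ε, ‖x - y‖ ≤ L * ‖F x - F y‖) := by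
    intro θ
    by_cases hθ : θ ∈ U
    · obtain ⟨K, hK0, hK⟩ :=
        (fderiv ℝ F θ).toLinearMap.exists_antilipschitzWith
          (by rw [LinearMap.ker_eq_bot]; exact hDF θ hθ)
      have hstrict : HasStrictFDerivAt F (fderiv ℝ F θ) θ :=
        hF.contDiffAt.hasStrictFDerivAt one_ne_zero
      have hc : (0 : NNReal) < (2 * K)⁻¹ := by positivity
      obtain ⟨s, hs_nhds, happrox⟩ := hstrict.approximates_deriv_on_nhds (Or.inr hc)
      obtain ⟨ε, hε, hball⟩ := Metric.mem_nhds_iff.mp hs_nhds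
      refine ⟨2 * K, ε, by positivity, hε, fun _ x hx y hy => ?_⟩
      have h1 : ‖x - y‖ ≤ (K : ℝ) * ‖(fderiv ℝ F θ) (x - y)‖ := by
        have := hK.le_mul_dist x y
        rwa [dist_eq_norm, dist_eq_norm, ← map_sub] at this
      have h2 : ‖F x - F y - (fderiv ℝ F θ) (x - y)‖ ≤ ((2 * K : NNReal) : ℝ)⁻¹ * ‖x - y‖ := by
        have := happrox x (hball hx) y (hball hy)
        rwa [NNReal.coe_inv] at this
      have h3 : ‖(fderiv ℝ F θ) (x - y)‖ ≤ ‖F x - F y‖ + ‖F x - F y - (fderiv ℝ F θ) (x - y)‖ := by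
        have := norm_sub_le (F x - F y) (F x - F y - (fderiv ℝ F θ) (x - y))
        simpa using this
      have hK0' : (0 : ℝ) < K := hK0
      have h2K : ((2 * K : NNReal) : ℝ) = 2 * K := by push_cast; ring
      rw [h2K] at h2
      have hinv : ((2 : ℝ) * K)⁻¹ * ‖x - y‖ * K = ‖x - y‖ / 2 := by
        field_simp
      nlinarith [norm_nonneg (x - y), norm_nonneg (F x - F y)]
    · exact ⟨1, 1, one_pos, one_pos, fun h => absurd h hθ⟩
  choose L ε hL hε hb using hloc
  -- finite subcover by half-radius balls
  obtain ⟨t, htU, hcov⟩ := hUcomp.elim_nhds_subcover (fun θ => ball θ (ε θ / 2))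
    (fun θ _ => ball_mem_nhds θ (by linarith [hε θ]))
  have htne : t.Nonempty := by
    obtain ⟨x, hx⟩ := hU
    obtain ⟨θ, hθ, -⟩ := mem_iUnion₂.mp (hcov hx)
    exact ⟨θ, hθ⟩
  set δ : ℝ := t.inf' htne (fun θ => ε θ / 2) with hδdef
  have hδ : 0 < δ := by
    rw [hδdef, Finset.lt_inf'_iff]
    exact fun θ _ => by linarith [hε θ]
  set Lm : ℝ := t.sup' htne L with hLmdef
  have hLm : 0 < Lm := by
    obtain ⟨θ, hθ⟩ := htne
    exact lt_of_lt_of_le (hL θ) (Finset.le_sup' L hθ)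
  -- near pairs
  have hnear : ∀ x ∈ U, ∀ y ∈ U, dist x y < δ → ‖x - y‖ ≤ Lm * ‖F x - F y‖ := by
    intro x hx y hy hxy
    obtain ⟨θ, hθt, hxθ⟩ := mem_iUnion₂.mp (hcov hx)
    have hδle : δ ≤ ε θ / 2 := Finset.inf'_le _ hθt
    have hxb : x ∈ ball θ (ε θ) := by
      rw [mem_ball] at hxθ ⊢; linarith
    have hyb : y ∈ ball θ (ε θ) := by
      rw [mem_ball] at hxθ ⊢
      calc dist y θ ≤ dist y x + dist x θ := dist_triangle _ _ _
        _ < δ + ε θ / 2 := by rw [dist_comm y x]; linarith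
        _ ≤ ε θ := by linarith
    have := hb θ (htU θ hθt) x hxb y hyb
    calc ‖x - y‖ ≤ L θ * ‖F x - F y‖ := this
      _ ≤ Lm * ‖F x - F y‖ := by
          apply mul_le_mul_of_nonneg_right (Finset.le_sup' L hθt) (norm_nonneg _)
  -- far pairs
  set T : Set (EuclideanSpace ℝ (Fin m) × EuclideanSpace ℝ (Fin m)) :=
    (U ×ˢ U) ∩ {p | δ ≤ dist p.1 p.2} with hTdef
  by_cases hT : T.Nonempty
  · have hTcomp : IsCompact T :=
      (hUcomp.prod hUcomp).inter_right
        (isClosed_le continuous_const (continuous_fst.dist continuous_snd))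
    have hgcont : ContinuousOn (fun p : EuclideanSpace ℝ (Fin m) × EuclideanSpace ℝ (Fin m) =>
        ‖F p.1 - F p.2‖) T :=
      (((hF.continuous.comp continuous_fst).sub (hF.continuous.comp continuous_snd)).norm).continuousOn
    obtain ⟨p₀, hp₀T, hp₀min⟩ := hTcomp.exists_isMinOn hT hgcont
    set μ : ℝ := ‖F p₀.1 - F p₀.2‖ with hμdef
    have hμpos : 0 < μ := by
      rw [hμdef, norm_pos_iff, sub_ne_zero]
      intro heq
      have h1 : p₀.1 ∈ U := hp₀T.1.1
      have h2 : p₀.2 ∈ U := hp₀T.1.2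
      have : p₀.1 = p₀.2 := hFinj h1 h2 heq
      have := hp₀T.2
      simp only [this, dist_self, mem_setOf_eq] at this ⊢
      have h3 : δ ≤ dist p₀.1 p₀.2 := hp₀T.2
      rw [‹p₀.1 = p₀.2›, dist_self] at h3
      linarith
    obtain ⟨D, hD⟩ := Metric.isBounded_iff.mp hUcomp.isBounded
    refine ⟨max Lm (D / μ), lt_max_of_lt_left hLm, fun x hx y hy => ?_⟩
    rcases lt_or_ge (dist x y) δ with h | h
    · calc ‖x - y‖ ≤ Lm * ‖F x - F y‖ := hnear x hx y hy h
        _ ≤ max Lm (D / μ) * ‖F x - F y‖ :=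
          mul_le_mul_of_nonneg_right (le_max_left _ _) (norm_nonneg _)
    · have hmem : (x, y) ∈ T := ⟨⟨hx, hy⟩, h⟩
      have hμle : μ ≤ ‖F x - F y‖ := isMinOn_iff.mp hp₀min (x, y) hmem
      have hxyD : ‖x - y‖ ≤ D := by rw [← dist_eq_norm]; exact hD hx hy
      have hDμ : D / μ ≤ max Lm (D / μ) := le_max_right _ _
      have hDnn : 0 ≤ D := le_trans dist_nonneg (hD hx hx)
      have h4 : ‖x - y‖ ≤ (D / μ) * ‖F x - F y‖ := by
        rw [div_mul_eq_mul_div, le_div_iff₀ hμpos]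
        nlinarith
      calc ‖x - y‖ ≤ (D / μ) * ‖F x - F y‖ := h4
        _ ≤ max Lm (D / μ) * ‖F x - F y‖ :=
            mul_le_mul_of_nonneg_right hDμ (norm_nonneg _)
  · refine ⟨Lm, hLm, fun x hx y hy => ?_⟩
    rcases lt_or_ge (dist x y) δ with h | h
    · exact hnear x hx y hy h
    · exact (hT ⟨(x, y), ⟨⟨hx, hy⟩, h⟩⟩).elim


theorem abstract_stability_high_res (m N M : ℕ) (U : Set (EuclideanSpace ℝ (Fin m)))
    (F : EuclideanSpace ℝ (Fin m) → EuclideanSpace ℂ (Fin N))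
    (G : EuclideanSpace ℝ (Fin m) → EuclideanSpace ℂ (Fin M))
    (C' : ℝ)
    (hUconv : Convex ℝ U) (hUcomp : IsCompact U)
    (hF : ContDiff ℝ 1 F) (hFinj : Set.InjOn F U)
    (hDF : ∀ θ ∈ U, Function.Injective (fderiv ℝ F θ))
    (hG : ContDiff ℝ 1 G)
    (hDG : ∀ θ ∈ U, ‖fderiv ℝ G θ‖ ≤ C') :
    ∃ C'' > 0, ∀ θ ∈ U, ∀ θ' ∈ U, ‖G θ - G θ'‖ ≤ C'' * ‖F θ - F θ'‖ := by
  obtain ⟨c, hc, hrev⟩ := reverse_lip m N U F hUcomp hF hFinj hDF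
  have hGlip : ∀ θ ∈ U, ∀ θ' ∈ U, ‖G θ - G θ'‖ ≤ max C' 0 * ‖θ - θ'‖ := by
    intro θ hθ θ' hθ'
    exact hUconv.norm_image_sub_le_of_norm_fderiv_le
      (fun x _ => (hG.differentiable one_ne_zero).differentiableAt)
      (fun x hx => le_trans (hDG x hx) (le_max_left _ _)) hθ' hθ
  refine ⟨max C' 0 * c + 1, by positivity, fun θ hθ θ' hθ' => ?_⟩
  have h1 := hGlip θ hθ θ' hθ'
  have h2 := hrev θ hθ θ' hθ'
  have h3 : (0 : ℝ) ≤ max C' 0 := le_max_right _ _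
  have h4 := norm_nonneg (F θ - F θ')
  have h5 := norm_nonneg (θ - θ')
  nlinarith
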